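/- Let A ⊂ ℤ with |A| = N, 0 ∈ A, be spectral with spectrum Γ, 0 ∈ Γ, and suppose the Hadamard matrix (1/√N)(e^{2πiγa})_{γ∈Γ, a∈A} can be obtained from the standard N×N Hadamard matrix (1/√N)(e^{2πijk/N})_{j,k=0}^{N−1} by permutations of rows and columns. Then A = d·A_0 where d is an integer and A_0 is a complete set of residues modulo N with gcd(A_0) = 1; moreover Γ = (f/R)·L_0 where f and R are integers, L_0 is a complete set of residues modulo N with gcd(L_0) = 1, R = N·S where S divides d·f and d·f/S is mutually prime with N. Conversely, for any such data, Γ = (f/R)·L_0 is a spectrum for A = d·A_0. -/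

import Mathlib

open Complex Real

noncomputable section

/-- The enumerations `a : Fin N → ℤ` and `l : Fin N → ℝ` list a finite set `A ⊂ ℤ` together
with a spectrum `Γ ⊂ ℝ` for it. -/
def IsSpectrumPair (N : ℕ) (a : Fin N → ℤ) (l : Fin N → ℝ) : Prop :=
  Function.Injective a ∧ Function.Injective l ∧
  ∀ j k : Fin N,
    ∑ i : Fin N, Complex.exp (2 * Real.pi * Complex.I *
      (((a j : ℤ) : ℂ) - ((a k : ℤ) : ℂ)) * ((l i : ℝ) : ℂ)) =
    if j = k then (N : ℂ) else 0

/-- `v` enumerates a complete set of residues modulo `N`. -/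
def CompleteResiduesFun (N : ℕ) (v : Fin N → ℤ) : Prop :=
  ∀ z : ZMod N, ∃! i : Fin N, ((v i : ℤ) : ZMod N) = z

lemma exp_two_pi_eq_iff (x y : ℝ) :
    Complex.exp (2 * Real.pi * Complex.I * x) = Complex.exp (2 * Real.pi * Complex.I * y) ↔
    ∃ m : ℤ, x = y + m := by
  rw [Complex.exp_eq_exp_iff_exists_int]
  constructor
  · rintro ⟨n, hn⟩
    refine ⟨n, ?_⟩
    have h2 : (2 * Real.pi * Complex.I) ≠ 0 := by
      simp [Real.pi_ne_zero, Complex.I_ne_zero]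
    have : (2 * Real.pi * Complex.I) * x = (2 * Real.pi * Complex.I) * (y + n) := by
      rw [hn]; ring
    have := mul_left_cancel₀ h2 this
    exact_mod_cast this
  · rintro ⟨m, hm⟩
    refine ⟨m, ?_⟩
    have : (x:ℂ) = (y:ℂ) + (m:ℂ) := by exact_mod_cast congrArg (Complex.ofReal) hm
    rw [this]; ring

lemma real_mul_gcd_int {ι : Type*} (r : ℝ) (s : Finset ι) (v : ι → ℤ)
    (h : ∀ k ∈ s, ∃ m : ℤ, r * v k = m) : ∃ m : ℤ, r * (s.gcd v : ℤ) = m := by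
  classical
  induction s using Finset.induction with
  | empty => exact ⟨0, by simp⟩
  | @insert a s hx ih =>
    rw [Finset.gcd_insert]
    obtain ⟨mx, hmx⟩ := h a (Finset.mem_insert_self a s)
    obtain ⟨my, hmy⟩ := ih (fun k hk => h k (Finset.mem_insert_of_mem hk))
    refine ⟨Int.gcdA (v a) (s.gcd v) * mx + Int.gcdB (v a) (s.gcd v) * my, ?_⟩
    have hg : (GCDMonoid.gcd (v a) (s.gcd v) : ℤ) =
        v a * Int.gcdA (v a) (s.gcd v) + s.gcd v * Int.gcdB (v a) (s.gcd v) := by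
      rw [← Int.coe_gcd, Int.gcd_eq_gcd_ab]
    rw [hg]
    push_cast
    rw [← hmx, ← hmy]
    ring

lemma crf_bijective {N : ℕ} {v : Fin N → ℤ} (h : CompleteResiduesFun N v) :
    Function.Bijective (fun i : Fin N => ((v i : ℤ) : ZMod N)) :=
  Function.bijective_iff_existsUnique _ |>.2 h

lemma crf_injective {N : ℕ} {v : Fin N → ℤ} (h : CompleteResiduesFun N v) :
    Function.Injective v := by
  intro i j hij
  exact (crf_bijective h).1 (by simp [hij])

lemma crf_of_modinj {N : ℕ} (hN : 0 < N) {v : Fin N → ℤ}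
    (h : Function.Injective (fun i : Fin N => ((v i : ℤ) : ZMod N))) :
    CompleteResiduesFun N v := by
  haveI : NeZero N := ⟨hN.ne'⟩
  have hb : Function.Bijective (fun i : Fin N => ((v i : ℤ) : ZMod N)) := by
    rw [Fintype.bijective_iff_injective_and_card]
    exact ⟨h, by simp [ZMod.card]⟩
  exact fun z => hb.existsUnique z

lemma sum_exp_eq_zero {N : ℕ} (hN : 0 < N) (w : ℤ) (hw : ¬ ((N:ℤ) ∣ w))
    {L : Fin N → ℤ} (hL : CompleteResiduesFun N L) :
    ∑ i : Fin N, Complex.exp (2 * Real.pi * Complex.I *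
      (((w * L i : ℤ) : ℝ) / N : ℝ)) = 0 := by
  haveI : NeZero N := ⟨hN.ne'⟩
  have hNr : (N : ℝ) ≠ 0 := by exact_mod_cast hN.ne'
  set ζ : ℂ := Complex.exp (2 * Real.pi * Complex.I * ((w : ℝ) / N : ℝ)) with hζ
  have hterm : ∀ i : Fin N, Complex.exp (2 * Real.pi * Complex.I *
      (((w * L i : ℤ) : ℝ) / N : ℝ)) = ζ ^ ((L i : ZMod N).val) := by
    intro i
    have hpow : ζ ^ ((L i : ZMod N).val) =
        Complex.exp (2 * Real.pi * Complex.I *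
          ((((L i : ZMod N).val : ℝ)) * ((w:ℝ)/N) : ℝ)) := by
      rw [hζ, ← Complex.exp_nat_mul]
      congr 1
      push_cast
      ring
    rw [hpow, exp_two_pi_eq_iff]
    have hmod : (((L i : ZMod N).val : ℤ)) = L i % N := ZMod.val_intCast (L i)
    refine ⟨w * (L i / N), ?_⟩
    have hdecomp : (L i : ℤ) = ((L i : ZMod N).val : ℤ) + N * (L i / N) := by
      rw [hmod, Int.emod_def]; ring
    have key : ((w * L i : ℤ) : ℝ) =
        (((L i : ZMod N).val : ℝ)) * (w:ℝ) + (N:ℝ) * ((w * (L i / N) : ℤ) : ℝ) := by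
      push_cast
      rw [show ((L i : ℤ) : ℝ) = (((L i : ZMod N).val : ℤ) : ℝ) + (N:ℝ) * ((L i / N : ℤ) : ℝ)
        from by exact_mod_cast congrArg (fun z : ℤ => (z : ℝ)) hdecomp]
      push_cast
      ring
    rw [key]
    field_simp
  rw [Finset.sum_congr rfl (fun i _ => hterm i)]
  have hre : ∑ i : Fin N, ζ ^ ((L i : ZMod N).val) = ∑ z : ZMod N, ζ ^ z.val :=
    Fintype.sum_bijective _ (crf_bijective hL) _ _ (fun i => rfl)
  rw [hre]
  have hzval : ∑ z : ZMod N, ζ ^ z.val = ∑ k ∈ Finset.range N, ζ ^ k := by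
    apply Finset.sum_nbij' (fun z : ZMod N => z.val) (fun k : ℕ => (k : ZMod N))
    · intro z _; exact Finset.mem_range.2 (ZMod.val_lt z)
    · intro k _; exact Finset.mem_univ _
    · intro z _; simp [ZMod.natCast_val, ZMod.intCast_zmod_cast]
    · intro k hk; exact ZMod.val_natCast_of_lt (Finset.mem_range.1 hk)
    · intro z _; rfl
  rw [hzval]
  have hζ1 : ζ ≠ 1 := by
    intro hcon
    rw [show (1:ℂ) = Complex.exp (2 * Real.pi * Complex.I * ((0:ℝ):ℂ)) from by simp] at hcon
    rw [exp_two_pi_eq_iff] at hcon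
    obtain ⟨m, hm⟩ := hcon
    apply hw
    refine ⟨m, ?_⟩
    have : (w : ℝ) = N * m := by
      field_simp at hm
      linarith [hm]
    exact_mod_cast this
  rw [geom_sum_eq hζ1]
  have hN1 : ζ ^ N = 1 := by
    rw [hζ, ← Complex.exp_nat_mul,
      show (N:ℂ) * (2 * Real.pi * Complex.I * ((w : ℝ) / N : ℝ)) =
        (w : ℤ) * (2 * Real.pi * Complex.I) from by
        have hNc : (N:ℂ) ≠ 0 := by exact_mod_cast hN.ne'
        push_cast
        field_simp]
    exact Complex.exp_int_mul_two_pi_mul_I w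
  rw [hN1]; simp

lemma isUnit_zmod_of_gcd {N : ℕ} {m : ℤ} (h : Int.gcd m N = 1) :
    IsUnit ((m : ℤ) : ZMod N) := by
  obtain ⟨u, v, huv⟩ := Int.isCoprime_iff_gcd_eq_one.2 h
  apply IsUnit.of_mul_eq_one ((u : ZMod N))
  have := congrArg (fun z : ℤ => ((z : ZMod N))) huv
  simp only [Int.cast_add, Int.cast_mul, Int.cast_one, Int.cast_natCast,
    ZMod.natCast_self, mul_zero, add_zero] at this
  rw [mul_comm] at this
  exact this

lemma gcd_of_isUnit_zmod {N : ℕ} {m : ℤ} (h : IsUnit ((m : ℤ) : ZMod N)) :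
    Int.gcd m N = 1 := by
  have : IsUnit ((m.natAbs : ℕ) : ZMod N) := by
    rw [show ((m.natAbs : ℕ) : ZMod N) = ((m.natAbs : ℤ) : ZMod N) from (Int.cast_natCast _).symm]
    rcases Int.natAbs_eq m with he | he
    · rw [← he]; exact h
    · have hna : (m.natAbs : ℤ) = -m := by omega
      rw [hna, Int.cast_neg]
      exact h.neg
  exact (ZMod.isUnit_iff_coprime m.natAbs N).1 this

lemma converse_dir (N : ℕ) (hN : 0 < N) (d f S : ℤ) (A₀ L₀ : Fin N → ℤ)
    (hA : CompleteResiduesFun N A₀) (hAg : Finset.univ.gcd A₀ = 1)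
    (hL : CompleteResiduesFun N L₀) (hLg : Finset.univ.gcd L₀ = 1)
    (hS : S ∣ d * f) (hcop : Int.gcd (d * f / S) (N : ℤ) = 1) :
    IsSpectrumPair N (fun k => d * A₀ k)
      (fun j => ((f : ℝ) * (L₀ j : ℝ)) / (((N : ℤ) * S : ℤ) : ℝ)) := by
  rcases eq_or_lt_of_le (Nat.one_le_of_lt hN) with h1 | h2
  · -- N = 1
    have hN1 : N = 1 := h1.symm
    subst hN1
    refine ⟨fun i j _ => Subsingleton.elim i j, fun i j _ => Subsingleton.elim i j, ?_⟩
    intro j k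
    have hjk : j = k := Subsingleton.elim j k
    subst hjk
    simp
  · -- N ≥ 2
    have hN2 : 2 ≤ N := h2
    set m : ℤ := d * f / S with hm_def
    have hm : d * f = S * m := (Int.ediv_mul_cancel hS).symm.trans (mul_comm _ _)
    have hmN : Int.gcd m N = 1 := hcop
    have hmne : m ≠ 0 := by
      intro h0
      rw [h0] at hmN
      simp [Int.gcd] at hmN
      omega
    have hSne : S ≠ 0 := by
      intro h0
      rw [h0] at hS hm_def
      have : d * f = 0 := by simpa using hS
      rw [hm_def, this] at hmne
      simp at hmne
    have hdf : d * f ≠ 0 := by rw [hm]; exact mul_ne_zero hSne hmne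
    have hdne : d ≠ 0 := fun h0 => hdf (by rw [h0, zero_mul])
    have hfne : f ≠ 0 := fun h0 => hdf (by rw [h0, mul_zero])
    have hNSne : (((N : ℤ) * S : ℤ) : ℝ) ≠ 0 := by
      exact_mod_cast mul_ne_zero (by exact_mod_cast hN.ne' : (N:ℤ) ≠ 0) hSne
    refine ⟨?_, ?_, ?_⟩
    · intro i j hij
      simp only at hij
      exact crf_injective hA (mul_left_cancel₀ hdne hij)
    · intro i j hij
      simp only at hij
      rw [div_eq_div_iff hNSne hNSne] at hij
      have h1 : (f : ℝ) * (L₀ i : ℝ) = (f : ℝ) * (L₀ j : ℝ) :=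
        mul_right_cancel₀ hNSne hij
      have h2 : (L₀ i : ℝ) = (L₀ j : ℝ) :=
        mul_left_cancel₀ (by exact_mod_cast hfne) h1
      exact crf_injective hL (by exact_mod_cast h2)
    · intro j k
      by_cases hjk : j = k
      · subst hjk
        simp
      · rw [if_neg hjk]
        have hw : ¬ ((N:ℤ) ∣ m * (A₀ j - A₀ k)) := by
          intro hdvd
          have h0 : ((m * (A₀ j - A₀ k) : ℤ) : ZMod N) = 0 := by
            rw [ZMod.intCast_zmod_eq_zero_iff_dvd]
            exact_mod_cast hdvd
          push_cast at h0
          have hunit := isUnit_zmod_of_gcd hmN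
          have := hunit.mul_right_eq_zero.mp h0
          have heq : ((A₀ j : ℤ) : ZMod N) = ((A₀ k : ℤ) : ZMod N) := by
            rwa [sub_eq_zero] at this
          exact hjk ((crf_bijective hA).1 heq)
        have hsum := sum_exp_eq_zero hN (m * (A₀ j - A₀ k)) hw hL
        rw [← hsum]
        apply Finset.sum_congr rfl
        intro i _
        congr 1
        push_cast
        have hSC : (S : ℂ) ≠ 0 := by exact_mod_cast hSne
        have hNC : (N : ℂ) ≠ 0 := by exact_mod_cast hN.ne'
        have hmC : (d : ℂ) * f = S * m := by exact_mod_cast hm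
        field_simp
        linear_combination (((A₀ j:ℂ) - A₀ k) * (L₀ i)) * hmC

lemma forward_dir (N : ℕ) (hN : 0 < N) (a : Fin N → ℤ) (γ : Fin N → ℝ)
    (hsp : IsSpectrumPair N a γ)
    (ha0 : ∃ i, a i = 0) (hg0 : ∃ i, γ i = 0)
    (hHad : ∃ σ τ : Equiv.Perm (Fin N), ∀ j k : Fin N,
      ((1 : ℂ) / Real.sqrt N) * Complex.exp (2 * Real.pi * Complex.I *
          ((γ j : ℝ) : ℂ) * ((a k : ℤ) : ℂ)) =
      ((1 : ℂ) / Real.sqrt N) * Complex.exp (2 * Real.pi * Complex.I *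
          ((((σ j : Fin N) : ℕ) * ((τ k : Fin N) : ℕ) : ℕ) : ℂ) / (N : ℂ))) :
    ∃ (d : ℤ) (A₀ : Fin N → ℤ), (∀ k, a k = d * A₀ k) ∧
      CompleteResiduesFun N A₀ ∧ Finset.univ.gcd A₀ = 1 ∧
      ∃ (f R S : ℤ) (L₀ : Fin N → ℤ),
        (∀ j, γ j = ((f : ℝ) * (L₀ j : ℝ)) / (R : ℝ)) ∧
        CompleteResiduesFun N L₀ ∧ Finset.univ.gcd L₀ = 1 ∧
        R = (N : ℤ) * S ∧ S ∣ d * f ∧ Int.gcd (d * f / S) (N : ℤ) = 1 := by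
  rcases eq_or_lt_of_le (Nat.one_le_of_lt hN) with h1 | hN2
  · -- N = 1
    have hN1 : N = 1 := h1.symm
    subst hN1
    obtain ⟨i0, hi0⟩ := ha0
    obtain ⟨j0, hj0⟩ := hg0
    have hcrf : CompleteResiduesFun 1 (fun _ : Fin 1 => (1:ℤ)) := by
      intro z
      refine ⟨0, Subsingleton.elim _ _, fun y _ => Subsingleton.elim _ _⟩
    refine ⟨0, fun _ => 1, ?_, hcrf, ?_, 0, 1, 1, fun _ => 1, ?_, hcrf, ?_, by ring, ⟨0, by ring⟩, by decide⟩
    · intro k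
      rw [Subsingleton.elim k i0, hi0]; ring
    · simp
    · intro j
      rw [Subsingleton.elim j j0, hj0]; simp
    · simp
  · -- N ≥ 2
    have hNR : (N : ℝ) ≠ 0 := by positivity
    obtain ⟨σ, τ, hH⟩ := hHad
    have hs : ((1 : ℂ) / Real.sqrt N) ≠ 0 := by
      apply one_div_ne_zero
      have : (0:ℝ) < Real.sqrt N := Real.sqrt_pos.2 (by exact_mod_cast hN)
      exact_mod_cast this.ne'
    have key : ∀ j k : Fin N, ∃ m : ℤ,
        γ j * (a k : ℝ) = (((σ j : ℕ) * (τ k : ℕ) : ℕ) : ℝ) / N + m := by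
      intro j k
      have hexp := mul_left_cancel₀ hs (hH j k)
      rw [show 2 * Real.pi * Complex.I * ((γ j : ℝ) : ℂ) * ((a k : ℤ) : ℂ)
            = 2 * Real.pi * Complex.I * ((γ j * (a k : ℝ) : ℝ) : ℂ) from by push_cast; ring,
          show 2 * Real.pi * Complex.I * ((((σ j : ℕ) * (τ k : ℕ) : ℕ) : ℂ)) / (N:ℂ)
            = 2 * Real.pi * Complex.I * (((((σ j : ℕ) * (τ k : ℕ) : ℕ) : ℝ) / N : ℝ) : ℂ) from by
              push_cast; ring] at hexp
      exact (exp_two_pi_eq_iff _ _).1 hexp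
    -- d
    set d : ℤ := Finset.univ.gcd a with hd_def
    have hane : ∃ k, a k ≠ 0 := by
      by_contra hall
      push_neg at hall
      have h01 : (⟨0, by omega⟩ : Fin N) = ⟨1, by omega⟩ :=
        hsp.1 ((hall _).trans (hall _).symm)
      simp [Fin.ext_iff] at h01
    have hd0 : d ≠ 0 := by
      intro h0
      obtain ⟨k, hk⟩ := hane
      exact hk (Finset.gcd_eq_zero_iff.1 h0 k (Finset.mem_univ k))
    set A₀ : Fin N → ℤ := fun k => a k / d with hA_def
    have ha' : ∀ k, a k = d * A₀ k := by
      intro k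
      exact (Int.mul_ediv_cancel' (Finset.gcd_dvd (Finset.mem_univ k))).symm
    have hAg : Finset.univ.gcd A₀ = 1 := by
      obtain ⟨k, hk⟩ := hane
      exact Finset.gcd_div_eq_one (Finset.mem_univ k) hk
    -- rationality of γ
    have hrat : ∀ j, ∃ t : ℤ, (N : ℝ) * γ j * d = t := by
      intro j
      have := real_mul_gcd_int ((N:ℝ) * γ j) Finset.univ a (fun k _ => by
        obtain ⟨m, hm⟩ := key j k
        refine ⟨((σ j : ℕ) * (τ k : ℕ) : ℕ) + N * m, ?_⟩
        push_cast
        rw [show (N:ℝ) * γ j * (a k : ℝ) = (N:ℝ) * (γ j * (a k:ℝ)) from by ring, hm]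
        field_simp
        push_cast
        ring)
      obtain ⟨t, ht⟩ := this
      exact ⟨t, ht⟩
    choose t ht using hrat
    have hγt : ∀ j, γ j = (t j : ℝ) / ((N:ℝ) * (d:ℝ)) := by
      intro j
      have hdR : ((d:ℤ):ℝ) ≠ 0 := by exact_mod_cast hd0
      field_simp
      rw [← ht j]; ring
    -- g
    set g : ℤ := Finset.univ.gcd t with hg_def
    have htne : ∃ j, t j ≠ 0 := by
      by_contra hall
      push_neg at hall
      have hzero : ∀ j, γ j = 0 := by
        intro j; rw [hγt j, hall j]; simp
      have h01 : (⟨0, by omega⟩ : Fin N) = ⟨1, by omega⟩ :=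
        hsp.2.1 ((hzero _).trans (hzero _).symm)
      simp [Fin.ext_iff] at h01
    have hg0 : g ≠ 0 := by
      intro h0
      obtain ⟨j, hj⟩ := htne
      exact hj (Finset.gcd_eq_zero_iff.1 h0 j (Finset.mem_univ j))
    set L₀ : Fin N → ℤ := fun j => t j / g with hL_def
    have ht' : ∀ j, t j = g * L₀ j := by
      intro j
      exact (Int.mul_ediv_cancel' (Finset.gcd_dvd (Finset.mem_univ j))).symm
    have hLg : Finset.univ.gcd L₀ = 1 := by
      obtain ⟨j, hj⟩ := htne
      exact Finset.gcd_div_eq_one (Finset.mem_univ j) hj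
    have hγ' : ∀ j, γ j = ((g:ℝ) * (L₀ j : ℝ)) / (((N:ℤ) * d : ℤ) : ℝ) := by
      intro j
      rw [hγt j, ht' j]
      push_cast
      ring_nf
    -- key integer congruence
    have key2 : ∀ j k : Fin N, (((g * L₀ j * A₀ k : ℤ)) : ZMod N)
        = (((σ j : ℕ) : ZMod N)) * (((τ k : ℕ) : ZMod N)) := by
      intro j k
      obtain ⟨m, hm⟩ := key j k
      have hreal : ((g * L₀ j * A₀ k : ℤ) : ℝ)
          = (((σ j : ℕ) * (τ k : ℕ) : ℕ) : ℝ) + N * m := by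
        have hdR : ((d:ℤ):ℝ) ≠ 0 := by exact_mod_cast hd0
        have h := hm
        rw [hγ' j, ha' k] at h
        push_cast at h ⊢
        have hNd : ((d:ℤ):ℝ) * (N:ℝ) ≠ 0 := mul_ne_zero hdR hNR
        apply mul_right_cancel₀ hNd
        field_simp at h
        linear_combination ((d:ℝ) * N) * h
      have hint : (g * L₀ j * A₀ k : ℤ)
          = (((σ j : ℕ) * (τ k : ℕ) : ℕ) : ℤ) + N * m := by exact_mod_cast hreal
      rw [hint]
      push_cast
      simp [ZMod.natCast_self]
    haveI : NeZero N := ⟨hN.ne'⟩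
    have h1N : 1 < N := hN2
    set j₁ : Fin N := σ.symm ⟨1, h1N⟩ with hj₁
    set k₁ : Fin N := τ.symm ⟨1, h1N⟩ with hk₁
    have hσj₁ : ((σ j₁ : Fin N) : ℕ) = 1 := by rw [hj₁]; simp
    have hτk₁ : ((τ k₁ : Fin N) : ℕ) = 1 := by rw [hk₁]; simp
    -- A₀ complete residues
    have hAcrf : CompleteResiduesFun N A₀ := by
      apply crf_of_modinj hN
      intro k k' hkk
      simp only at hkk
      have e1 := key2 j₁ k
      have e2 := key2 j₁ k'
      rw [hσj₁] at e1 e2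
      have : (((τ k : ℕ) : ZMod N)) = (((τ k' : ℕ) : ZMod N)) := by
        rw [Nat.cast_one, one_mul] at e1 e2
        rw [← e1, ← e2]
        push_cast
        rw [hkk]
      have hval : ((τ k : Fin N) : ℕ) = ((τ k' : Fin N) : ℕ) := by
        have := congrArg ZMod.val this
        rwa [ZMod.val_natCast_of_lt (τ k).isLt, ZMod.val_natCast_of_lt (τ k').isLt] at this
      exact τ.injective (Fin.ext hval)
    -- L₀ complete residues
    have hLcrf : CompleteResiduesFun N L₀ := by
      apply crf_of_modinj hN
      intro j j' hjj
      simp only at hjj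
      have e1 := key2 j k₁
      have e2 := key2 j' k₁
      rw [hτk₁] at e1 e2
      have : (((σ j : ℕ) : ZMod N)) = (((σ j' : ℕ) : ZMod N)) := by
        rw [Nat.cast_one, mul_one] at e1 e2
        rw [← e1, ← e2]
        push_cast
        rw [hjj]
      have hval : ((σ j : Fin N) : ℕ) = ((σ j' : Fin N) : ℕ) := by
        have := congrArg ZMod.val this
        rwa [ZMod.val_natCast_of_lt (σ j).isLt, ZMod.val_natCast_of_lt (σ j').isLt] at this
      exact σ.injective (Fin.ext hval)
    -- gcd(g, N) = 1
    have hgN : Int.gcd g N = 1 := by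
      apply gcd_of_isUnit_zmod
      have e := key2 j₁ k₁
      rw [hσj₁, hτk₁] at e
      push_cast at e
      have e' : ((g : ℤ) : ZMod N) * ((L₀ j₁ * A₀ k₁ : ℤ) : ZMod N) = 1 := by
        push_cast
        linear_combination e
      exact IsUnit.of_mul_eq_one _ e'
    refine ⟨d, A₀, ha', hAcrf, hAg, g, (N:ℤ) * d, d, L₀, hγ', hLcrf, hLg, rfl, ⟨g, rfl⟩, ?_⟩
    rw [Int.mul_ediv_cancel_left g hd0]
    exact hgN

/-- if `A ∋ 0` is spectral with spectrum `Γ ∋ 0` and the associated Hadamard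
matrix `(1/√N)(e^{2πiγa})` is obtained from the standard one `(1/√N)(e^{2πijk/N})` by
permuting rows and columns, then `A = d·A₀` with `A₀` a complete set of residues mod `N` and
`gcd(A₀) = 1`, and `Γ = (f/R)·L₀` with `L₀` a complete set of residues mod `N`, `gcd(L₀) = 1`,
`R = N·S`, `S ∣ df` and `df/S` coprime to `N`. Conversely, any such data gives a spectrum
`(f/R)·L₀` for `A = d·A₀`. -/
theorem hadamard_standard_characterization :
    (∀ (N : ℕ), 0 < N → ∀ (a : Fin N → ℤ) (γ : Fin N → ℝ),
      IsSpectrumPair N a γ →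
      (∃ i, a i = 0) → (∃ i, γ i = 0) →
      (∃ σ τ : Equiv.Perm (Fin N), ∀ j k : Fin N,
        ((1 : ℂ) / Real.sqrt N) * Complex.exp (2 * Real.pi * Complex.I *
            ((γ j : ℝ) : ℂ) * ((a k : ℤ) : ℂ)) =
        ((1 : ℂ) / Real.sqrt N) * Complex.exp (2 * Real.pi * Complex.I *
            ((((σ j : Fin N) : ℕ) * ((τ k : Fin N) : ℕ) : ℕ) : ℂ) / (N : ℂ))) →
      ∃ (d : ℤ) (A₀ : Fin N → ℤ), (∀ k, a k = d * A₀ k) ∧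
        CompleteResiduesFun N A₀ ∧ Finset.univ.gcd A₀ = 1 ∧
        ∃ (f R S : ℤ) (L₀ : Fin N → ℤ),
          (∀ j, γ j = ((f : ℝ) * (L₀ j : ℝ)) / (R : ℝ)) ∧
          CompleteResiduesFun N L₀ ∧ Finset.univ.gcd L₀ = 1 ∧
          R = (N : ℤ) * S ∧ S ∣ d * f ∧ Int.gcd (d * f / S) (N : ℤ) = 1) ∧
    (∀ (N : ℕ), 0 < N → ∀ (d f S : ℤ) (A₀ L₀ : Fin N → ℤ),
      CompleteResiduesFun N A₀ → Finset.univ.gcd A₀ = 1 →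
      CompleteResiduesFun N L₀ → Finset.univ.gcd L₀ = 1 →
      S ∣ d * f → Int.gcd (d * f / S) (N : ℤ) = 1 →
      IsSpectrumPair N (fun k => d * A₀ k)
        (fun j => ((f : ℝ) * (L₀ j : ℝ)) / (((N : ℤ) * S : ℤ) : ℝ))) := by
  exact ⟨forward_dir, converse_dir⟩
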